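/- arXiv:2406.05358 — 2 statements merged into one kernel-verified Lean document; each statement's English description precedes it below -/
import Mathlib

section
/- Let B([0,T]×𝒳) be the Banach space of bounded Borel measurable functions ψ: [0,T]×𝒳 → ℝ with the supremum norm ‖ψ‖ = sup_{(t,x)} |ψ(t,x)|. Fix a policy π ∈ Π, set β = 2λ+1, R(t,x) = Σ_{S∈𝒜(x)} r(S) π(S|t,x) + γ ℋ(π(·|t,x)), and define the operator ℒ on B([0,T]×𝒳) by (ℒψ)(t,x) = e^{βt} ∫_t^T { R(s,x) + Σ_{S∈𝒜(x)} ( Σ_{y∈𝒳} e^{−βs} ψ(s,y) q(y|s,x,S) ) π(S|s,x) } ds. Then ℒ is well-defined and is a contraction on B([0,T]×𝒳): for all ψ₁, ψ₂ ∈ B([0,T]×𝒳), ‖ℒψ₁ − ℒψ₂‖ ≤ (2λ/(2λ+1)) ‖ψ₁ − ψ₂‖. -/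
open MeasureTheory intervalIntegral

namespace RLNRM

/-- Primitives of the choice-based network revenue management model:
`m` resources with initial inventory `c`, `n` products with prices `p`,
consumption matrix `A`, Poisson arrival rate `lam` on the horizon `[0,T]`,
MNL-type choice probabilities `P j S` (buy `j` when offered `S`) and `P0 S`
(no purchase), and entropy temperature `gamma`. -/
structure NRM (m n : ℕ) where
  c : Fin m → ℕ
  A : Fin m → Fin n → ℕ
  p : Fin n → ℝ
  lam : ℝ
  lam_pos : 0 < lam
  T : ℝ
  T_pos : 0 < T
  gamma : ℝ
  gamma_nonneg : 0 ≤ gamma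
  P : Finset (Fin n) → Fin n → ℝ
  P0 : Finset (Fin n) → ℝ
  P_nonneg : ∀ S j, 0 ≤ P S j
  P0_nonneg : ∀ S, 0 ≤ P0 S
  P_sum_one : ∀ S, P0 S + ∑ j ∈ S, P S j = 1
  P_not_mem : ∀ S j, j ∉ S → P S j = 0

variable {m n : ℕ}

/-- The `j`-th column of the consumption matrix, as an integer vector. -/
def NRM.col (M : NRM m n) (j : Fin n) : Fin m → ℤ := fun i => (M.A i j : ℤ)

/-- The initial inventory as an integer vector. -/
def NRM.cZ (M : NRM m n) : Fin m → ℤ := fun i => (M.c i : ℤ)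

/-- The state space `𝒳 = {0,…,c 1} × ⋯ × {0,…,c m}`. -/
noncomputable def NRM.States (M : NRM m n) : Finset (Fin m → ℤ) :=
  Fintype.piFinset fun i => Finset.Icc 0 (M.c i : ℤ)

/-- The feasible assortments `𝒜(x)` at state `x`. -/
def NRM.feas (M : NRM m n) (x : Fin m → ℤ) : Finset (Finset (Fin n)) :=
  Finset.univ.filter fun S => ∀ j ∈ S, ∀ i, (M.A i j : ℤ) ≤ x i

/-- The controlled transition rates `q(y | t, x, S)`. -/
noncomputable def NRM.q (M : NRM m n) (_t : ℝ) (x : Fin m → ℤ) (S : Finset (Fin n))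
    (y : Fin m → ℤ) : ℝ :=
  if y = x then -(M.lam * (1 - M.P0 S))
  else ∑ j ∈ Finset.univ.filter (fun j : Fin n => M.col j = x - y), M.lam * M.P S j

/-- The revenue rate `r(S) = λ ∑ j, p j * P j S`. -/
noncomputable def NRM.r (M : NRM m n) (S : Finset (Fin n)) : ℝ :=
  M.lam * ∑ j, M.p j * M.P S j

/-- The Hamiltonian `H(t, x, S, v) = r S + ∑_{y ∈ 𝒳} v t y * q (y | t, x, S)`. -/
noncomputable def NRM.H (M : NRM m n) (t : ℝ) (x : Fin m → ℤ) (S : Finset (Fin n))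
    (v : ℝ → (Fin m → ℤ) → ℝ) : ℝ :=
  M.r S + ∑ y ∈ M.States, v t y * M.q t x S y

/-- An admissible randomized Markov policy. -/
structure Policy (M : NRM m n) where
  π : ℝ → (Fin m → ℤ) → Finset (Fin n) → ℝ
  measurable_t : ∀ x S, Measurable fun t => π t x S
  nonneg : ∀ t x S, 0 ≤ π t x S
  sum_one : ∀ t x, ∑ S : Finset (Fin n), π t x S = 1
  supported : ∀ t x S, S ∉ M.feas x → π t x S = 0
  continuous_t : ∀ x S, Continuous fun t => π t x S

/-- The entropy `ℋ(π(·|t,x)) = -∑_{S ∈ 𝒜(x)} π(S|t,x) log π(S|t,x)`. -/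
noncomputable def NRM.ent (M : NRM m n) (pol : Policy M) (t : ℝ) (x : Fin m → ℤ) : ℝ :=
  -∑ S ∈ M.feas x, pol.π t x S * Real.log (pol.π t x S)

/-- `v ∈ C^{1,0}([0,T] × 𝒳)`: continuously differentiable in `t` for each state `x`. -/
def NRM.C10 (M : NRM m n) (v : ℝ → (Fin m → ℤ) → ℝ) : Prop :=
  ∀ x ∈ M.States, ContDiffOn ℝ 1 (fun t => v t x) (Set.Icc 0 M.T)

/-- The time derivative `∂v/∂t (t,x)` (within the horizon `[0,T]`). -/
noncomputable def NRM.dvt (M : NRM m n) (v : ℝ → (Fin m → ℤ) → ℝ) (t : ℝ)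
    (x : Fin m → ℤ) : ℝ :=
  derivWithin (fun s => v s x) (Set.Icc 0 M.T) t

/-- Right-continuous state path built from the jump data of a trajectory:
`x0` initial state, `L` jumps at times `τ k` selling products `prd k`. -/
noncomputable def pathX (M : NRM m n) (x0 : Fin m → ℤ) (L : ℕ) (τ : ℕ → ℝ)
    (prd : ℕ → Fin n) (t : ℝ) : Fin m → ℤ :=
  x0 - ∑ k ∈ (Finset.range L).filter (fun k => τ k ≤ t), M.col (prd k)

/-- Left limit `X_{t-}` of the state path. -/
noncomputable def pathXleft (M : NRM m n) (x0 : Fin m → ℤ) (L : ℕ) (τ : ℕ → ℝ)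
    (prd : ℕ → Fin n) (t : ℝ) : Fin m → ℤ :=
  x0 - ∑ k ∈ (Finset.range L).filter (fun k => τ k < t), M.col (prd k)

/-- A probabilistic model of the controlled sales process under policy `pol`:
`law t x` is the law of the trajectory conditional on `X_t = x` (Markov family);
a trajectory is described by its `L` sale events, with jump times `τ`, sold
products `prd`, and offered assortments `act`.  The fields record that jumps lie
in `(t, T]`, are ordered, keep the state in `𝒳`, that the sold product belongs to
the offered assortment, and that sales of product `j` have intensity
`λ ∑_{S ∈ 𝒜(X_{s-})} P j S * π(S | s, X_{s-})`. -/
structure SampleModel (M : NRM m n) (pol : Policy M) (Ω : Type*)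
    [MeasurableSpace Ω] where
  law : ℝ → (Fin m → ℤ) → Measure Ω
  law_prob : ∀ t x, IsProbabilityMeasure (law t x)
  L : Ω → ℕ
  τ : Ω → ℕ → ℝ
  prd : Ω → ℕ → Fin n
  act : Ω → ℕ → Finset (Fin n)
  meas_L : Measurable L
  meas_τ : ∀ k, Measurable fun ω => τ ω k
  meas_prd : ∀ k, Measurable fun ω => prd ω k
  jumps_mem : ∀ t x, ∀ᵐ ω ∂law t x, ∀ k < L ω, t < τ ω k ∧ τ ω k ≤ M.T
  jumps_mono : ∀ t x, ∀ᵐ ω ∂law t x, ∀ k l, k < l → l < L ω → τ ω k < τ ω l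
  states_mem : ∀ t x, x ∈ M.States →
    ∀ᵐ ω ∂law t x, ∀ s : ℝ, pathX M x (L ω) (τ ω) (prd ω) s ∈ M.States
  sold_in_act : ∀ t x, ∀ᵐ ω ∂law t x, ∀ k < L ω, prd ω k ∈ act ω k
  intensity : ∀ t x, x ∈ M.States → 0 ≤ t → ∀ (j : Fin n) (u : ℝ), t ≤ u → u ≤ M.T →
    (∫ ω, ((((Finset.range (L ω)).filter fun k => τ ω k ≤ u ∧ prd ω k = j).card : ℝ))
        ∂law t x)
      = ∫ ω, (∫ s in t..u, M.lam *
          ∑ S ∈ M.feas (pathXleft M x (L ω) (τ ω) (prd ω) s),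
            M.P S j * pol.π s (pathXleft M x (L ω) (τ ω) (prd ω) s) S) ∂law t x

variable {M : NRM m n} {pol : Policy M} {Ω : Type*} [MeasurableSpace Ω]

/-- The pathwise reward-plus-entropy-bonus collected on `(t, T]` by a trajectory
started at `(t, x)`: `∫_{(t,T]} p^⊤ dN_s + γ ∫_t^T ℋ(π(·|s, X_{s-})) ds`. -/
noncomputable def SampleModel.rew (V : SampleModel M pol Ω) (t : ℝ) (x : Fin m → ℤ)
    (ω : Ω) : ℝ :=
  (∑ k ∈ Finset.range (V.L ω), if t < V.τ ω k ∧ V.τ ω k ≤ M.T then M.p (V.prd ω k) else 0)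
    + M.gamma * ∫ s in t..M.T, M.ent pol s (pathXleft M x (V.L ω) (V.τ ω) (V.prd ω) s)

/-- The entropy-regularized value function
`J(t,x;π) = E[∫_{(t,T]} p^⊤ dN_s + γ ∫_t^T ℋ(π(·|s, X_{s-})) ds | X_t = x]`. -/
noncomputable def SampleModel.J (V : SampleModel M pol Ω) (t : ℝ) (x : Fin m → ℤ) : ℝ :=
  ∫ ω, V.rew t x ω ∂V.law t x

end RLNRM

namespace RLNRM

/-- The operator `ℒ` on `B([0,T] × 𝒳)`:
`(ℒψ)(t,x) = e^{βt} ∫_t^T { R(s,x) + ∑_{S ∈ 𝒜(x)} (∑_{y ∈ 𝒳} e^{-βs} ψ(s,y) q(y|s,x,S)) π(S|s,x) } ds`,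
with `β = 2λ + 1` and `R(s,x) = ∑_{S ∈ 𝒜(x)} r(S) π(S|s,x) + γ ℋ(π(·|s,x))`. -/
noncomputable def NRM.Lop {m n : ℕ} (M : NRM m n) (pol : Policy M)
    (ψ : ℝ → (Fin m → ℤ) → ℝ) (t : ℝ) (x : Fin m → ℤ) : ℝ :=
  Real.exp ((2 * M.lam + 1) * t) *
    ∫ s in t..M.T,
      ((∑ S ∈ M.feas x, M.r S * pol.π s x S) + M.gamma * M.ent pol s x
        + ∑ S ∈ M.feas x,
            (∑ y ∈ M.States, Real.exp (-((2 * M.lam + 1) * s)) * ψ s y * M.q s x S y)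
              * pol.π s x S)


section AuxLemmas

variable {m n : ℕ}

lemma pi_le_one (M : NRM m n) (pol : Policy M) (t : ℝ) (x : Fin m → ℤ)
    (S : Finset (Fin n)) : pol.π t x S ≤ 1 := by
  have h := pol.sum_one t x
  have h2 : pol.π t x S ≤ ∑ S' : Finset (Fin n), pol.π t x S' :=
    Finset.single_le_sum (fun S' _ => pol.nonneg t x S') (Finset.mem_univ S)
  linarith

lemma sum_pi_feas_le_one (M : NRM m n) (pol : Policy M) (t : ℝ) (x : Fin m → ℤ) :
    ∑ S ∈ M.feas x, pol.π t x S ≤ 1 := by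
  have h := pol.sum_one t x
  calc ∑ S ∈ M.feas x, pol.π t x S ≤ ∑ S : Finset (Fin n), pol.π t x S :=
        Finset.sum_le_sum_of_subset_of_nonneg (Finset.subset_univ _)
          (fun S _ _ => pol.nonneg t x S)
    _ = 1 := h

lemma P_le_one (M : NRM m n) (S : Finset (Fin n)) (j : Fin n) : M.P S j ≤ 1 := by
  by_cases hj : j ∈ S
  · have h := M.P_sum_one S
    have h2 : M.P S j ≤ ∑ j' ∈ S, M.P S j' :=
      Finset.single_le_sum (fun j' _ => M.P_nonneg S j') hj
    have h3 := M.P0_nonneg S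
    linarith
  · rw [M.P_not_mem S j hj]; norm_num

lemma sum_P_eq (M : NRM m n) (S : Finset (Fin n)) : ∑ j, M.P S j = 1 - M.P0 S := by
  have h1 : ∑ j ∈ S, M.P S j = ∑ j, M.P S j :=
    Finset.sum_subset (Finset.subset_univ S) (fun j _ hj => M.P_not_mem S j hj)
  have h := M.P_sum_one S
  linarith

lemma oneSubP0_nonneg (M : NRM m n) (S : Finset (Fin n)) : 0 ≤ 1 - M.P0 S := by
  rw [← sum_P_eq]
  exact Finset.sum_nonneg fun j _ => M.P_nonneg S j

lemma q_abs_sum (M : NRM m n) (t : ℝ) {x : Fin m → ℤ} (hx : x ∈ M.States)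
    (S : Finset (Fin n)) : ∑ y ∈ M.States, |M.q t x S y| ≤ 2 * M.lam := by
  have hP : (∑ j, M.lam * M.P S j) = M.lam * (1 - M.P0 S) := by
    rw [← Finset.mul_sum, sum_P_eq]
  have h1 : 0 ≤ 1 - M.P0 S := oneSubP0_nonneg M S
  have hqx : |M.q t x S x| = M.lam * (1 - M.P0 S) := by
    rw [NRM.q, if_pos rfl, abs_neg, abs_of_nonneg (mul_nonneg M.lam_pos.le h1)]
  have herase : ∑ y ∈ M.States.erase x, |M.q t x S y| ≤ M.lam * (1 - M.P0 S) := by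
    have hcongr : ∀ y ∈ M.States.erase x, |M.q t x S y| =
        ∑ j ∈ Finset.univ.filter (fun j : Fin n => M.col j = x - y), M.lam * M.P S j := by
      intro y hy
      rw [NRM.q, if_neg (Finset.ne_of_mem_erase hy)]
      exact abs_of_nonneg (Finset.sum_nonneg fun j _ =>
        mul_nonneg M.lam_pos.le (M.P_nonneg S j))
    rw [Finset.sum_congr rfl hcongr]
    have hdisj : Set.PairwiseDisjoint (↑(M.States.erase x))
        (fun y => Finset.univ.filter (fun j : Fin n => M.col j = x - y)) := by
      intro y1 _ y2 _ hne
      simp only [Function.onFun]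
      rw [Finset.disjoint_left]
      intro j hj1 hj2
      simp only [Finset.mem_filter] at hj1 hj2
      exact absurd (sub_right_injective (hj1.2.symm.trans hj2.2)) hne
    calc ∑ y ∈ M.States.erase x, ∑ j ∈ Finset.univ.filter
          (fun j : Fin n => M.col j = x - y), M.lam * M.P S j
        = ∑ j ∈ (M.States.erase x).biUnion
            (fun y => Finset.univ.filter (fun j : Fin n => M.col j = x - y)),
            M.lam * M.P S j := (Finset.sum_biUnion hdisj).symm
      _ ≤ ∑ j, M.lam * M.P S j :=
          Finset.sum_le_sum_of_subset_of_nonneg (Finset.subset_univ _)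
            (fun j _ _ => mul_nonneg M.lam_pos.le (M.P_nonneg S j))
      _ = M.lam * (1 - M.P0 S) := hP
  have hsplit : ∑ y ∈ M.States, |M.q t x S y|
      = ∑ y ∈ M.States.erase x, |M.q t x S y| + |M.q t x S x| :=
    (Finset.sum_erase_add _ _ hx).symm
  have hP0 := M.P0_nonneg S
  have hlam := M.lam_pos
  rw [hsplit, hqx]
  nlinarith [herase]

lemma core_bound (M : NRM m n) (pol : Policy M) (φ : ℝ → (Fin m → ℤ) → ℝ) {C s : ℝ}
    {x : Fin m → ℤ} (hx : x ∈ M.States) (hC : ∀ y ∈ M.States, |φ s y| ≤ C) :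
    |∑ S ∈ M.feas x,
        (∑ y ∈ M.States, Real.exp (-((2 * M.lam + 1) * s)) * φ s y * M.q s x S y)
          * pol.π s x S|
      ≤ Real.exp (-((2 * M.lam + 1) * s)) * (2 * M.lam * C) := by
  set e := Real.exp (-((2 * M.lam + 1) * s)) with he
  have he0 : 0 ≤ e := (Real.exp_pos _).le
  have hC0 : 0 ≤ C := (abs_nonneg _).trans (hC x hx)
  have hbnd : 0 ≤ e * (2 * M.lam * C) :=
    mul_nonneg he0 (by nlinarith [M.lam_pos])
  have hinner : ∀ S, |∑ y ∈ M.States, e * φ s y * M.q s x S y| ≤ e * (2 * M.lam * C) := by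
    intro S
    calc |∑ y ∈ M.States, e * φ s y * M.q s x S y|
        ≤ ∑ y ∈ M.States, |e * φ s y * M.q s x S y| := Finset.abs_sum_le_sum_abs _ _
      _ ≤ ∑ y ∈ M.States, e * C * |M.q s x S y| := by
          refine Finset.sum_le_sum fun y hy => ?_
          rw [abs_mul, abs_mul, abs_of_nonneg he0]
          have h1 := hC y hy
          have h2 : (0:ℝ) ≤ |M.q s x S y| := abs_nonneg _
          nlinarith [mul_nonneg (mul_nonneg he0 h2) (sub_nonneg.mpr h1)]
      _ = e * C * ∑ y ∈ M.States, |M.q s x S y| := (Finset.mul_sum _ _ _).symm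
      _ ≤ e * C * (2 * M.lam) :=
          mul_le_mul_of_nonneg_left (q_abs_sum M s hx S) (mul_nonneg he0 hC0)
      _ = e * (2 * M.lam * C) := by ring
  calc |∑ S ∈ M.feas x, (∑ y ∈ M.States, e * φ s y * M.q s x S y) * pol.π s x S|
      ≤ ∑ S ∈ M.feas x, |(∑ y ∈ M.States, e * φ s y * M.q s x S y) * pol.π s x S| :=
        Finset.abs_sum_le_sum_abs _ _
    _ ≤ ∑ S ∈ M.feas x, e * (2 * M.lam * C) * pol.π s x S := by
        refine Finset.sum_le_sum fun S _ => ?_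
        rw [abs_mul, abs_of_nonneg (pol.nonneg s x S)]
        exact mul_le_mul_of_nonneg_right (hinner S) (pol.nonneg s x S)
    _ = e * (2 * M.lam * C) * ∑ S ∈ M.feas x, pol.π s x S := (Finset.mul_sum _ _ _).symm
    _ ≤ e * (2 * M.lam * C) * 1 :=
        mul_le_mul_of_nonneg_left (sum_pi_feas_le_one M pol s x) hbnd
    _ = e * (2 * M.lam * C) := mul_one _

lemma mul_log_abs_le {x : ℝ} (h0 : 0 ≤ x) (h1 : x ≤ 1) : |x * Real.log x| ≤ 1 := by
  rcases eq_or_lt_of_le h0 with h | h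
  · simp [← h]
  · have hlog : Real.log x ≤ 0 := Real.log_nonpos h0 h1
    have hnp : x * Real.log x ≤ 0 := by
      nlinarith [mul_nonneg h0 (neg_nonneg.mpr hlog)]
    rw [abs_of_nonpos hnp]
    have h2 : Real.log x⁻¹ ≤ x⁻¹ - 1 := Real.log_le_sub_one_of_pos (inv_pos.mpr h)
    have h3 : -(x * Real.log x) = x * Real.log x⁻¹ := by rw [Real.log_inv]; ring
    rw [h3]
    calc x * Real.log x⁻¹ ≤ x * (x⁻¹ - 1) := mul_le_mul_of_nonneg_left h2 h0
      _ = 1 - x := by rw [mul_sub, mul_inv_cancel₀ h.ne']; ring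
      _ ≤ 1 := by linarith

lemma ent_abs (M : NRM m n) (pol : Policy M) (t : ℝ) (x : Fin m → ℤ) :
    |M.ent pol t x| ≤ 2 ^ n := by
  unfold NRM.ent
  rw [abs_neg]
  have hcard : ((M.feas x).card : ℝ) ≤ 2 ^ n := by
    have h : (M.feas x).card ≤ 2 ^ n := by
      calc (M.feas x).card ≤ Fintype.card (Finset (Fin n)) := Finset.card_le_univ _
        _ = 2 ^ n := by rw [Fintype.card_finset, Fintype.card_fin]
    exact_mod_cast h
  calc |∑ S ∈ M.feas x, pol.π t x S * Real.log (pol.π t x S)|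
      ≤ ∑ S ∈ M.feas x, |pol.π t x S * Real.log (pol.π t x S)| :=
        Finset.abs_sum_le_sum_abs _ _
    _ ≤ ∑ _S ∈ M.feas x, (1:ℝ) := Finset.sum_le_sum fun S _ =>
        mul_log_abs_le (pol.nonneg t x S) (pi_le_one M pol t x S)
    _ = ((M.feas x).card : ℝ) := by simp
    _ ≤ 2 ^ n := hcard

lemma r_abs (M : NRM m n) (S : Finset (Fin n)) : |M.r S| ≤ M.lam * ∑ j, |M.p j| := by
  unfold NRM.r
  rw [abs_mul, abs_of_pos M.lam_pos]
  refine mul_le_mul_of_nonneg_left ?_ M.lam_pos.le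
  calc |∑ j, M.p j * M.P S j| ≤ ∑ j, |M.p j * M.P S j| := Finset.abs_sum_le_sum_abs _ _
    _ ≤ ∑ j, |M.p j| := Finset.sum_le_sum fun j _ => by
        rw [abs_mul]
        exact mul_le_of_le_one_right (abs_nonneg _)
          (by rw [abs_of_nonneg (M.P_nonneg S j)]; exact P_le_one M S j)

/-- The integrand of the operator `ℒ`. -/
noncomputable def intg (M : NRM m n) (pol : Policy M) (ψ : ℝ → (Fin m → ℤ) → ℝ)
    (x : Fin m → ℤ) (s : ℝ) : ℝ :=
  (∑ S ∈ M.feas x, M.r S * pol.π s x S) + M.gamma * M.ent pol s x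
    + ∑ S ∈ M.feas x,
        (∑ y ∈ M.States, Real.exp (-((2 * M.lam + 1) * s)) * ψ s y * M.q s x S y)
          * pol.π s x S

lemma intg_meas (M : NRM m n) (pol : Policy M) (ψ : ℝ → (Fin m → ℤ) → ℝ)
    (hm : ∀ y, Measurable fun t => ψ t y) (x : Fin m → ℤ) :
    Measurable (intg M pol ψ x) := by
  unfold intg
  refine Measurable.add (Measurable.add ?_ ?_) ?_
  · exact (continuous_finset_sum _ fun S _ =>
      continuous_const.mul (pol.continuous_t x S)).measurable
  · have hent : Continuous fun s => M.ent pol s x := by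
      unfold NRM.ent
      exact (continuous_finset_sum _ fun S _ =>
        Real.continuous_mul_log.comp (pol.continuous_t x S)).neg
    exact (continuous_const.mul hent).measurable
  · refine Finset.measurable_sum _ fun S _ => ?_
    refine Measurable.mul ?_ (pol.continuous_t x S).measurable
    refine Finset.measurable_sum _ fun y _ => ?_
    have hqm : Measurable fun s : ℝ => M.q s x S y := by
      have h : (fun s : ℝ => M.q s x S y) = fun _ : ℝ => M.q 0 x S y := rfl
      rw [h]; exact measurable_const
    have hexp : Measurable fun s : ℝ => Real.exp (-((2 * M.lam + 1) * s)) :=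
      (Real.continuous_exp.comp ((continuous_const.mul continuous_id).neg)).measurable
    exact (hexp.mul (hm y)).mul hqm

lemma intg_bound (M : NRM m n) (pol : Policy M) (ψ : ℝ → (Fin m → ℤ) → ℝ) {C₁ : ℝ}
    (hb : ∀ t ∈ Set.Icc (0:ℝ) M.T, ∀ x ∈ M.States, |ψ t x| ≤ C₁) :
    ∀ s ∈ Set.Icc (0:ℝ) M.T, ∀ x ∈ M.States,
      |intg M pol ψ x s| ≤ M.lam * (∑ j, |M.p j|) + M.gamma * 2 ^ n + 2 * M.lam * C₁ := by
  intro s hs x hx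
  have hC0 : 0 ≤ C₁ := (abs_nonneg _).trans (hb s hs x hx)
  have hK : 0 ≤ M.lam * ∑ j, |M.p j| :=
    mul_nonneg M.lam_pos.le (Finset.sum_nonneg fun j _ => abs_nonneg _)
  have h1 : |∑ S ∈ M.feas x, M.r S * pol.π s x S| ≤ M.lam * ∑ j, |M.p j| := by
    calc |∑ S ∈ M.feas x, M.r S * pol.π s x S|
        ≤ ∑ S ∈ M.feas x, |M.r S * pol.π s x S| := Finset.abs_sum_le_sum_abs _ _
      _ ≤ ∑ S ∈ M.feas x, (M.lam * ∑ j, |M.p j|) * pol.π s x S := by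
          refine Finset.sum_le_sum fun S _ => ?_
          rw [abs_mul, abs_of_nonneg (pol.nonneg s x S)]
          exact mul_le_mul_of_nonneg_right (r_abs M S) (pol.nonneg s x S)
      _ = (M.lam * ∑ j, |M.p j|) * ∑ S ∈ M.feas x, pol.π s x S :=
          (Finset.mul_sum _ _ _).symm
      _ ≤ (M.lam * ∑ j, |M.p j|) * 1 :=
          mul_le_mul_of_nonneg_left (sum_pi_feas_le_one M pol s x) hK
      _ = M.lam * ∑ j, |M.p j| := mul_one _
  have h2 : |M.gamma * M.ent pol s x| ≤ M.gamma * 2 ^ n := by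
    rw [abs_mul, abs_of_nonneg M.gamma_nonneg]
    exact mul_le_mul_of_nonneg_left (ent_abs M pol s x) M.gamma_nonneg
  have h3 : |∑ S ∈ M.feas x,
      (∑ y ∈ M.States, Real.exp (-((2 * M.lam + 1) * s)) * ψ s y * M.q s x S y)
        * pol.π s x S| ≤ 2 * M.lam * C₁ := by
    have hcore := core_bound M pol ψ hx (fun y hy => hb s hs y hy)
    have he1 : Real.exp (-((2 * M.lam + 1) * s)) ≤ 1 := by
      rw [Real.exp_le_one_iff]
      have := M.lam_pos
      have := hs.1
      nlinarith
    have h2l : 0 ≤ 2 * M.lam * C₁ := by nlinarith [M.lam_pos]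
    exact hcore.trans (mul_le_of_le_one_left h2l he1)
  unfold intg
  exact (abs_add_three _ _ _).trans (by linarith)

lemma intervalIntegrable_of_bounded {f : ℝ → ℝ} (hm : Measurable f) {K a b : ℝ}
    (hab : a ≤ b) (h : ∀ s ∈ Set.Icc a b, |f s| ≤ K) :
    IntervalIntegrable f MeasureTheory.volume a b := by
  rw [intervalIntegrable_iff_integrableOn_Ioc_of_le hab]
  refine MeasureTheory.Measure.integrableOn_of_bounded (M := K)
    measure_Ioc_lt_top.ne hm.aestronglyMeasurable ?_
  filter_upwards [MeasureTheory.ae_restrict_mem measurableSet_Ioc] with s hs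
  rw [Real.norm_eq_abs]
  exact h s ⟨hs.1.le, hs.2⟩

lemma measurable_intervalIntegral_right {f : ℝ → ℝ} (hf : Measurable f) (T : ℝ) :
    Measurable fun t => ∫ s in t..T, f s := by
  have hg1 : Measurable fun p : ℝ × ℝ => (Set.Ioc p.1 T).indicator f p.2 := by
    have hs : MeasurableSet {p : ℝ × ℝ | p.1 < p.2 ∧ p.2 ≤ T} :=
      (measurableSet_lt measurable_fst measurable_snd).inter
        (measurableSet_le measurable_snd measurable_const)
    have h : (fun p : ℝ × ℝ => (Set.Ioc p.1 T).indicator f p.2)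
        = Set.indicator {p : ℝ × ℝ | p.1 < p.2 ∧ p.2 ≤ T} (fun p => f p.2) := by
      funext p
      simp only [Set.indicator_apply, Set.mem_Ioc, Set.mem_setOf_eq]
    rw [h]
    exact (hf.comp measurable_snd).indicator hs
  have hg2 : Measurable fun p : ℝ × ℝ => (Set.Ioc T p.1).indicator f p.2 := by
    have hs : MeasurableSet {p : ℝ × ℝ | T < p.2 ∧ p.2 ≤ p.1} :=
      (measurableSet_lt measurable_const measurable_snd).inter
        (measurableSet_le measurable_snd measurable_fst)
    have h : (fun p : ℝ × ℝ => (Set.Ioc T p.1).indicator f p.2)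
        = Set.indicator {p : ℝ × ℝ | T < p.2 ∧ p.2 ≤ p.1} (fun p => f p.2) := by
      funext p
      simp only [Set.indicator_apply, Set.mem_Ioc, Set.mem_setOf_eq]
    rw [h]
    exact (hf.comp measurable_snd).indicator hs
  have h1 : Measurable fun t => ∫ s, (Set.Ioc t T).indicator f s :=
    hg1.stronglyMeasurable.integral_prod_right'.measurable
  have h2 : Measurable fun t => ∫ s, (Set.Ioc T t).indicator f s :=
    hg2.stronglyMeasurable.integral_prod_right'.measurable
  have heq : (fun t => ∫ s in t..T, f s)
      = fun t => (∫ s, (Set.Ioc t T).indicator f s)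
          - ∫ s, (Set.Ioc T t).indicator f s := by
    funext u
    rw [MeasureTheory.integral_indicator measurableSet_Ioc,
      MeasureTheory.integral_indicator measurableSet_Ioc]
    rfl
  rw [heq]
  exact h1.sub h2

lemma integral_exp_neg_mul {b : ℝ} (hb : 0 < b) (u v : ℝ) :
    ∫ s in u..v, Real.exp (-(b * s))
      = (Real.exp (-(b * u)) - Real.exp (-(b * v))) / b := by
  have h := intervalIntegral.integral_comp_mul_left (f := fun z => Real.exp z)
    (a := u) (b := v) (neg_ne_zero.mpr hb.ne')
  rw [integral_exp, smul_eq_mul] at h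
  simp only [neg_mul] at h
  rw [h, inv_neg]
  ring

end AuxLemmas

/-- The operator `ℒ` is well defined on the space `B([0,T] × 𝒳)` of bounded Borel
measurable functions and is a contraction for the supremum norm, with contraction
constant `2λ/(2λ+1)`: whenever `C` bounds `|ψ₁ - ψ₂|` on `[0,T] × 𝒳`, the value
`(2λ/(2λ+1)) C` bounds `|ℒψ₁ - ℒψ₂|` on `[0,T] × 𝒳`. -/
theorem Lop_contraction {m n : ℕ} (M : NRM m n) (pol : Policy M)
    (ψ₁ ψ₂ : ℝ → (Fin m → ℤ) → ℝ)
    (hψ₁m : ∀ x, Measurable fun t => ψ₁ t x)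
    (hψ₂m : ∀ x, Measurable fun t => ψ₂ t x)
    (hψ₁b : ∃ C₁, ∀ t ∈ Set.Icc (0:ℝ) M.T, ∀ x ∈ M.States, |ψ₁ t x| ≤ C₁)
    (hψ₂b : ∃ C₂, ∀ t ∈ Set.Icc (0:ℝ) M.T, ∀ x ∈ M.States, |ψ₂ t x| ≤ C₂) :
    ((∀ x, Measurable fun t => M.Lop pol ψ₁ t x) ∧
      ∃ C₀, ∀ t ∈ Set.Icc (0:ℝ) M.T, ∀ x ∈ M.States, |M.Lop pol ψ₁ t x| ≤ C₀) ∧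
    ∀ C : ℝ, (∀ t ∈ Set.Icc (0:ℝ) M.T, ∀ x ∈ M.States, |ψ₁ t x - ψ₂ t x| ≤ C) →
      ∀ t ∈ Set.Icc (0:ℝ) M.T, ∀ x ∈ M.States,
        |M.Lop pol ψ₁ t x - M.Lop pol ψ₂ t x| ≤ (2 * M.lam / (2 * M.lam + 1)) * C := by
  obtain ⟨C₁, hb₁⟩ := hψ₁b
  obtain ⟨C₂, hb₂⟩ := hψ₂b
  have hβ : (0:ℝ) < 2 * M.lam + 1 := by nlinarith [M.lam_pos]
  refine ⟨⟨fun x => ?_, ?_⟩, ?_⟩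
  · -- measurability of Lop
    have h : (fun t => M.Lop pol ψ₁ t x)
        = fun t => Real.exp ((2 * M.lam + 1) * t) * ∫ s in t..M.T, intg M pol ψ₁ x s := rfl
    rw [h]
    exact ((Real.continuous_exp.comp (continuous_const.mul continuous_id)).measurable).mul
      (measurable_intervalIntegral_right (intg_meas M pol ψ₁ hψ₁m x) M.T)
  · -- boundedness of Lop
    refine ⟨Real.exp ((2 * M.lam + 1) * M.T) *
      ((M.lam * (∑ j, |M.p j|) + M.gamma * 2 ^ n + 2 * M.lam * C₁) * M.T), ?_⟩
    intro t ht x hx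
    set K := M.lam * (∑ j, |M.p j|) + M.gamma * 2 ^ n + 2 * M.lam * C₁ with hK
    have hC₁0 : 0 ≤ C₁ := (abs_nonneg _).trans (hb₁ t ht x hx)
    have hK0 : 0 ≤ K := by
      have h1 : 0 ≤ M.lam * (∑ j, |M.p j|) :=
        mul_nonneg M.lam_pos.le (Finset.sum_nonneg fun j _ => abs_nonneg _)
      have h2 : 0 ≤ M.gamma * 2 ^ n := mul_nonneg M.gamma_nonneg (by positivity)
      have h3 : 0 ≤ 2 * M.lam * C₁ := by nlinarith [M.lam_pos]
      rw [hK]; linarith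
    have hLop : M.Lop pol ψ₁ t x
        = Real.exp ((2 * M.lam + 1) * t) * ∫ s in t..M.T, intg M pol ψ₁ x s := rfl
    rw [hLop, abs_mul, abs_of_pos (Real.exp_pos _)]
    have hnorm : ‖∫ s in t..M.T, intg M pol ψ₁ x s‖ ≤ K * |M.T - t| := by
      apply intervalIntegral.norm_integral_le_of_norm_le_const
      intro s hs
      rw [Set.uIoc_of_le ht.2] at hs
      rw [Real.norm_eq_abs, hK]
      exact intg_bound M pol ψ₁ hb₁ s ⟨ht.1.trans hs.1.le, hs.2⟩ x hx
    rw [Real.norm_eq_abs] at hnorm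
    have hTt : |M.T - t| ≤ M.T := by
      rw [abs_of_nonneg (by linarith [ht.2])]
      linarith [ht.1]
    have hexp : Real.exp ((2 * M.lam + 1) * t) ≤ Real.exp ((2 * M.lam + 1) * M.T) := by
      apply Real.exp_le_exp.mpr
      nlinarith [M.lam_pos, ht.2]
    calc Real.exp ((2 * M.lam + 1) * t) * |∫ s in t..M.T, intg M pol ψ₁ x s|
        ≤ Real.exp ((2 * M.lam + 1) * M.T) * (K * M.T) := by
          apply mul_le_mul hexp ?_ (abs_nonneg _) (Real.exp_pos _).le
          exact hnorm.trans (mul_le_mul_of_nonneg_left hTt hK0)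
      _ = _ := rfl
  · -- contraction
    intro C hC t ht x hx
    have hC0 : 0 ≤ C := (abs_nonneg _).trans (hC t ht x hx)
    have hIcc : ∀ s ∈ Set.Icc t M.T, s ∈ Set.Icc (0:ℝ) M.T :=
      fun s hs => ⟨ht.1.trans hs.1, hs.2⟩
    have hi₁ : IntervalIntegrable (intg M pol ψ₁ x) MeasureTheory.volume t M.T :=
      intervalIntegrable_of_bounded (intg_meas M pol ψ₁ hψ₁m x) ht.2
        (fun s hs => intg_bound M pol ψ₁ hb₁ s (hIcc s hs) x hx)
    have hi₂ : IntervalIntegrable (intg M pol ψ₂ x) MeasureTheory.volume t M.T :=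
      intervalIntegrable_of_bounded (intg_meas M pol ψ₂ hψ₂m x) ht.2
        (fun s hs => intg_bound M pol ψ₂ hb₂ s (hIcc s hs) x hx)
    have hdiff : M.Lop pol ψ₁ t x - M.Lop pol ψ₂ t x
        = Real.exp ((2 * M.lam + 1) * t) *
            ∫ s in t..M.T, (intg M pol ψ₁ x s - intg M pol ψ₂ x s) := by
      have h1 : M.Lop pol ψ₁ t x
          = Real.exp ((2 * M.lam + 1) * t) * ∫ s in t..M.T, intg M pol ψ₁ x s := rfl
      have h2 : M.Lop pol ψ₂ t x
          = Real.exp ((2 * M.lam + 1) * t) * ∫ s in t..M.T, intg M pol ψ₂ x s := rfl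
      rw [h1, h2, intervalIntegral.integral_sub hi₁ hi₂, mul_sub]
    have hpt : ∀ s ∈ Set.Icc t M.T,
        |intg M pol ψ₁ x s - intg M pol ψ₂ x s|
          ≤ Real.exp (-((2 * M.lam + 1) * s)) * (2 * M.lam * C) := by
      intro s hs
      have heq : intg M pol ψ₁ x s - intg M pol ψ₂ x s
          = ∑ S ∈ M.feas x,
              (∑ y ∈ M.States,
                Real.exp (-((2 * M.lam + 1) * s)) * (ψ₁ s y - ψ₂ s y) * M.q s x S y)
                * pol.π s x S := by
        have hS : ∀ S ∈ M.feas x,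
            (∑ y ∈ M.States,
              Real.exp (-((2 * M.lam + 1) * s)) * (ψ₁ s y - ψ₂ s y) * M.q s x S y)
              * pol.π s x S
            = (∑ y ∈ M.States,
                Real.exp (-((2 * M.lam + 1) * s)) * ψ₁ s y * M.q s x S y) * pol.π s x S
              - (∑ y ∈ M.States,
                  Real.exp (-((2 * M.lam + 1) * s)) * ψ₂ s y * M.q s x S y) * pol.π s x S := by
          intro S _
          rw [← sub_mul, ← Finset.sum_sub_distrib]
          congr 1
          exact Finset.sum_congr rfl fun y _ => by ring
        rw [Finset.sum_congr rfl hS, Finset.sum_sub_distrib]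
        unfold intg
        ring
      rw [heq]
      exact core_bound M pol (fun u y => ψ₁ u y - ψ₂ u y) hx
        (fun y hy => hC s (hIcc s hs) y hy)
    have hgint : IntervalIntegrable
        (fun s => Real.exp (-((2 * M.lam + 1) * s)) * (2 * M.lam * C))
        MeasureTheory.volume t M.T :=
      (((Real.continuous_exp.comp ((continuous_const.mul continuous_id).neg)).mul
        continuous_const).intervalIntegrable t M.T)
    have hbound : ‖∫ s in t..M.T, (intg M pol ψ₁ x s - intg M pol ψ₂ x s)‖
        ≤ |∫ s in t..M.T, Real.exp (-((2 * M.lam + 1) * s)) * (2 * M.lam * C)| := by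
      apply intervalIntegral.norm_integral_le_abs_of_norm_le ?_ hgint
      filter_upwards [MeasureTheory.ae_restrict_mem measurableSet_uIoc] with s hs
      rw [Set.uIoc_of_le ht.2] at hs
      rw [Real.norm_eq_abs]
      exact hpt s ⟨hs.1.le, hs.2⟩
    rw [Real.norm_eq_abs] at hbound
    have hgval : ∫ s in t..M.T, Real.exp (-((2 * M.lam + 1) * s)) * (2 * M.lam * C)
        = (2 * M.lam * C) *
            ((Real.exp (-((2 * M.lam + 1) * t)) - Real.exp (-((2 * M.lam + 1) * M.T)))
              / (2 * M.lam + 1)) := by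
      rw [intervalIntegral.integral_mul_const, integral_exp_neg_mul hβ t M.T]
      ring
    have hexple : Real.exp (-((2 * M.lam + 1) * M.T)) ≤ Real.exp (-((2 * M.lam + 1) * t)) := by
      apply Real.exp_le_exp.mpr
      nlinarith [M.lam_pos, ht.2]
    have h2l : 0 ≤ 2 * M.lam * C := by nlinarith [M.lam_pos]
    have hg0 : 0 ≤ (2 * M.lam * C) *
        ((Real.exp (-((2 * M.lam + 1) * t)) - Real.exp (-((2 * M.lam + 1) * M.T)))
          / (2 * M.lam + 1)) :=
      mul_nonneg h2l (div_nonneg (sub_nonneg.mpr hexple) hβ.le)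
    have hAB : Real.exp ((2 * M.lam + 1) * t) *
        (Real.exp (-((2 * M.lam + 1) * t)) - Real.exp (-((2 * M.lam + 1) * M.T))) ≤ 1 := by
      rw [mul_sub, ← Real.exp_add, ← Real.exp_add]
      have h1 : (2 * M.lam + 1) * t + -((2 * M.lam + 1) * t) = 0 := by ring
      rw [h1, Real.exp_zero]
      have := Real.exp_pos ((2 * M.lam + 1) * t + -((2 * M.lam + 1) * M.T))
      linarith
    have hfrac : 0 ≤ 2 * M.lam * C / (2 * M.lam + 1) :=
      div_nonneg h2l hβ.le
    rw [hdiff, abs_mul, abs_of_pos (Real.exp_pos _)]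
    calc Real.exp ((2 * M.lam + 1) * t) *
          |∫ s in t..M.T, (intg M pol ψ₁ x s - intg M pol ψ₂ x s)|
        ≤ Real.exp ((2 * M.lam + 1) * t) *
            |∫ s in t..M.T, Real.exp (-((2 * M.lam + 1) * s)) * (2 * M.lam * C)| :=
          mul_le_mul_of_nonneg_left hbound (Real.exp_pos _).le
      _ = Real.exp ((2 * M.lam + 1) * t) *
            ((2 * M.lam * C) *
              ((Real.exp (-((2 * M.lam + 1) * t)) - Real.exp (-((2 * M.lam + 1) * M.T)))
                / (2 * M.lam + 1))) := by rw [hgval, abs_of_nonneg hg0]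
      _ = (2 * M.lam * C / (2 * M.lam + 1)) *
            (Real.exp ((2 * M.lam + 1) * t) *
              (Real.exp (-((2 * M.lam + 1) * t)) - Real.exp (-((2 * M.lam + 1) * M.T)))) := by
          ring
      _ ≤ (2 * M.lam * C / (2 * M.lam + 1)) * 1 :=
          mul_le_mul_of_nonneg_left hAB hfrac
      _ = (2 * M.lam / (2 * M.lam + 1)) * C := by ring


end RLNRM
end

section
/- For every policy π ∈ Π, the system of differential equations ∂v/∂t(t,x) + Σ_{S∈𝒜(x)} H(t,x,S,v(·,·)) π(S|t,x) + γ ℋ(π(·|t,x)) = 0 for (t,x) ∈ [0,T)×𝒳, with terminal condition v(T,x) = 0 for all x ∈ 𝒳, admits a solution v ∈ C^{1,0}([0,T]×𝒳); namely v(t,x) = e^{−βt} ψ*(t,x), where β = 2λ+1 and ψ* is the unique fixed point of the contraction ℒψ(t,x) = e^{βt} ∫_t^T { R(s,x) + Σ_{S∈𝒜(x)} ( Σ_{y∈𝒳} e^{−βs} ψ(s,y) q(y|s,x,S) ) π(S|s,x) } ds on the Banach space of bounded Borel measurable functions with the sup norm, where R(s,x) = Σ_{S∈𝒜(x)} r(S)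 π(S|s,x) + γ ℋ(π(·|s,x)). -/
open MeasureTheory intervalIntegral

namespace RLNRM

section Aux

open Set

variable {m n : ℕ} (M : NRM m n) (pol : Policy M)

/-- The integrand of the operator `ℒ`. -/
noncomputable def Gfun (h : ℝ → (Fin m → ℤ) → ℝ) (x : Fin m → ℤ) (s : ℝ) : ℝ :=
  ((∑ S ∈ M.feas x, M.r S * pol.π s x S) + M.gamma * M.ent pol s x
        + ∑ S ∈ M.feas x,
            (∑ y ∈ M.States, Real.exp (-((2 * M.lam + 1) * s)) * h s y * M.q s x S y)
              * pol.π s x S)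

lemma lop_eq (h : ℝ → (Fin m → ℤ) → ℝ) (t : ℝ) (x : Fin m → ℤ) :
    M.Lop pol h t x
      = Real.exp ((2 * M.lam + 1) * t) * ∫ s in t..M.T, Gfun M pol h x s := rfl

lemma Psum_eq (S : Finset (Fin n)) : ∑ j : Fin n, M.P S j = 1 - M.P0 S := by
  have h1 : ∑ j ∈ S, M.P S j = ∑ j : Fin n, M.P S j :=
    Finset.sum_subset (Finset.subset_univ S) (fun j _ hj => M.P_not_mem S j hj)
  have := M.P_sum_one S
  linarith

lemma qabs_sum (s : ℝ) {x : Fin m → ℤ} (hx : x ∈ M.States) (S : Finset (Fin n)) :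
    ∑ y ∈ M.States, |M.q s x S y| ≤ 2 * M.lam := by
  have hP0 : 0 ≤ 1 - M.P0 S := by
    have h := M.P_sum_one S
    have h2 := Finset.sum_nonneg fun j (_ : j ∈ S) => M.P_nonneg S j
    linarith
  have hP1 : 1 - M.P0 S ≤ 1 := by have := M.P0_nonneg S; linarith
  rw [← Finset.add_sum_erase _ _ hx]
  have h1 : |M.q s x S x| ≤ M.lam := by
    rw [NRM.q, if_pos rfl, abs_neg, abs_of_nonneg (by nlinarith [M.lam_pos])]
    nlinarith [M.lam_pos]
  have h2 : ∑ y ∈ M.States.erase x, |M.q s x S y| ≤ M.lam := by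
    have hsum : ∀ y ∈ M.States.erase x, |M.q s x S y|
        = ∑ j ∈ Finset.univ.filter (fun j : Fin n => M.col j = x - y), M.lam * M.P S j := by
      intro y hy
      rw [NRM.q, if_neg (Finset.ne_of_mem_erase hy)]
      exact abs_of_nonneg (Finset.sum_nonneg fun j _ =>
        mul_nonneg M.lam_pos.le (M.P_nonneg S j))
    calc ∑ y ∈ M.States.erase x, |M.q s x S y|
        = ∑ y ∈ M.States.erase x,
            ∑ j ∈ Finset.univ.filter (fun j : Fin n => M.col j = x - y), M.lam * M.P S j :=
          Finset.sum_congr rfl hsum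
      _ = ∑ y ∈ M.States.erase x, ∑ j : Fin n,
            if M.col j = x - y then M.lam * M.P S j else 0 := by
          exact Finset.sum_congr rfl fun y _ => Finset.sum_filter _ _
      _ = ∑ j : Fin n, ∑ y ∈ M.States.erase x,
            if M.col j = x - y then M.lam * M.P S j else 0 := Finset.sum_comm
      _ ≤ ∑ j : Fin n, M.lam * M.P S j := by
          refine Finset.sum_le_sum fun j _ => ?_
          have hiff : ∀ y : Fin m → ℤ, (M.col j = x - y) = (y = x - M.col j) := by
            intro y
            apply propext
            constructor
            · intro h; rw [h]; exact (sub_sub_cancel x y).symm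
            · intro h; rw [h]; exact (sub_sub_cancel x (M.col j)).symm
          simp_rw [hiff]
          rw [Finset.sum_ite_eq' (M.States.erase x) (x - M.col j) (fun _ => M.lam * M.P S j)]
          split_ifs
          · exact le_rfl
          · exact mul_nonneg M.lam_pos.le (M.P_nonneg S j)
      _ = M.lam * ∑ j : Fin n, M.P S j := by rw [Finset.mul_sum]
      _ ≤ M.lam := by
          rw [Psum_eq]
          nlinarith [M.lam_pos]
  have hq0 : 0 ≤ ∑ y ∈ M.States.erase x, |M.q s x S y| :=
    Finset.sum_nonneg fun y _ => abs_nonneg _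
  linarith

lemma inner_bound (s : ℝ) {x : Fin m → ℤ} (hx : x ∈ M.States)
    (h : ℝ → (Fin m → ℤ) → ℝ) {d : ℝ} (hd : 0 ≤ d)
    (hb : ∀ y ∈ M.States, |h s y| ≤ d) :
    |∑ S ∈ M.feas x,
        (∑ y ∈ M.States, Real.exp (-((2 * M.lam + 1) * s)) * h s y * M.q s x S y)
          * pol.π s x S|
      ≤ Real.exp (-((2 * M.lam + 1) * s)) * (2 * M.lam * d) := by
  set e := Real.exp (-((2 * M.lam + 1) * s)) with he
  have he0 : 0 ≤ e := Real.exp_nonneg _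
  have hbound : ∀ S ∈ M.feas x,
      |∑ y ∈ M.States, e * h s y * M.q s x S y| ≤ e * (2 * M.lam * d) := by
    intro S _
    calc |∑ y ∈ M.States, e * h s y * M.q s x S y|
        ≤ ∑ y ∈ M.States, |e * h s y * M.q s x S y| := Finset.abs_sum_le_sum_abs _ _
      _ ≤ ∑ y ∈ M.States, e * d * |M.q s x S y| := by
          refine Finset.sum_le_sum fun y hy => ?_
          rw [abs_mul, abs_mul, abs_of_nonneg he0]
          exact mul_le_mul_of_nonneg_right
            (mul_le_mul_of_nonneg_left (hb y hy) he0) (abs_nonneg _)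
      _ = e * d * ∑ y ∈ M.States, |M.q s x S y| := (Finset.mul_sum _ _ _).symm
      _ ≤ e * d * (2 * M.lam) := by
          have hq := qabs_sum M s hx S
          have hed : 0 ≤ e * d := mul_nonneg he0 hd
          nlinarith
      _ = e * (2 * M.lam * d) := by ring
  calc |∑ S ∈ M.feas x,
        (∑ y ∈ M.States, e * h s y * M.q s x S y) * pol.π s x S|
      ≤ ∑ S ∈ M.feas x,
        |(∑ y ∈ M.States, e * h s y * M.q s x S y) * pol.π s x S| :=
        Finset.abs_sum_le_sum_abs _ _
    _ = ∑ S ∈ M.feas x,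
        |∑ y ∈ M.States, e * h s y * M.q s x S y| * pol.π s x S := by
        refine Finset.sum_congr rfl fun S _ => ?_
        rw [abs_mul, abs_of_nonneg (pol.nonneg s x S)]
    _ ≤ ∑ S ∈ M.feas x, (e * (2 * M.lam * d)) * pol.π s x S :=
        Finset.sum_le_sum fun S hS =>
          mul_le_mul_of_nonneg_right (hbound S hS) (pol.nonneg s x S)
    _ = (e * (2 * M.lam * d)) * ∑ S ∈ M.feas x, pol.π s x S := (Finset.mul_sum _ _ _).symm
    _ ≤ (e * (2 * M.lam * d)) * 1 := by
        refine mul_le_mul_of_nonneg_left ?_ (mul_nonneg he0 (mul_nonneg (by nlinarith [M.lam_pos]) hd))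
        rw [← pol.sum_one s x]
        exact Finset.sum_le_sum_of_subset_of_nonneg (Finset.subset_univ _)
          fun S _ _ => pol.nonneg s x S
    _ = e * (2 * M.lam * d) := mul_one _

lemma Gfun_sub (h1 h2 : ℝ → (Fin m → ℤ) → ℝ) (x : Fin m → ℤ) (s : ℝ) :
    Gfun M pol h1 x s = Gfun M pol h2 x s
      + ∑ S ∈ M.feas x,
          (∑ y ∈ M.States,
            Real.exp (-((2 * M.lam + 1) * s)) * (h1 s y - h2 s y) * M.q s x S y)
            * pol.π s x S := by
  simp only [Gfun]
  rw [show (∑ S ∈ M.feas x,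
          (∑ y ∈ M.States,
            Real.exp (-((2 * M.lam + 1) * s)) * (h1 s y - h2 s y) * M.q s x S y)
            * pol.π s x S)
      = (∑ S ∈ M.feas x,
          (∑ y ∈ M.States, Real.exp (-((2 * M.lam + 1) * s)) * h1 s y * M.q s x S y)
            * pol.π s x S)
        - (∑ S ∈ M.feas x,
          (∑ y ∈ M.States, Real.exp (-((2 * M.lam + 1) * s)) * h2 s y * M.q s x S y)
            * pol.π s x S) from ?_]
  · ring
  · rw [← Finset.sum_sub_distrib]
    refine Finset.sum_congr rfl fun S _ => ?_
    rw [← sub_mul]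
    congr 1
    rw [← Finset.sum_sub_distrib]
    exact Finset.sum_congr rfl fun y _ => by ring

lemma G_cont (h : ℝ → (Fin m → ℤ) → ℝ) (hc : ∀ y, Continuous fun s => h s y)
    (x : Fin m → ℤ) : Continuous (Gfun M pol h x) := by
  have hexp : Continuous fun s : ℝ => Real.exp (-((2 * M.lam + 1) * s)) :=
    Real.continuous_exp.comp ((continuous_const.mul continuous_id).neg)
  refine Continuous.add (Continuous.add ?_ ?_) ?_
  · exact continuous_finset_sum _ fun S _ => continuous_const.mul (pol.continuous_t x S)
  · refine continuous_const.mul ?_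
    simp only [NRM.ent]
    exact (continuous_finset_sum _ fun S _ =>
      Real.continuous_mul_log.comp (pol.continuous_t x S)).neg
  · refine continuous_finset_sum _ fun S _ => Continuous.mul ?_ (pol.continuous_t x S)
    exact continuous_finset_sum _ fun y _ =>
      ((hexp.mul (hc y)).mul (continuous_const : Continuous fun _ : ℝ => M.q 0 x S y))

lemma intervalIntegrable_of_bdd {g : ℝ → ℝ} (hm : Measurable g) {C t u : ℝ}
    (hb : ∀ s ∈ Set.uIoc t u, |g s| ≤ C) : IntervalIntegrable g volume t u := by
  rw [intervalIntegrable_iff]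
  haveI : IsFiniteMeasure (volume.restrict (Set.uIoc t u)) := by
    constructor
    rw [Measure.restrict_apply_univ]
    exact measure_Ioc_lt_top
  refine ⟨hm.aestronglyMeasurable.restrict, ?_⟩
  refine MeasureTheory.HasFiniteIntegral.of_bounded (C := C) ?_
  exact (ae_restrict_iff' measurableSet_uIoc).mpr (ae_of_all _ fun s hs => by
    simpa [Real.norm_eq_abs] using hb s hs)

lemma primitive_hasDerivAt {g : ℝ → ℝ} (hg : Continuous g) (c t : ℝ) :
    HasDerivAt (fun u => ∫ s in u..c, g s) (-(g t)) t := by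
  have h1 : (fun u => ∫ s in u..c, g s)
      = fun u => (∫ s in (0:ℝ)..c, g s) - ∫ s in (0:ℝ)..u, g s := by
    funext u
    rw [integral_interval_sub_left (hg.intervalIntegrable _ _) (hg.intervalIntegrable _ _)]
  have h2 : HasDerivAt (fun u => ∫ s in (0:ℝ)..u, g s) (g t) t :=
    integral_hasDerivAt_right (hg.intervalIntegrable _ _)
      (hg.stronglyMeasurableAtFilter _ _) hg.continuousAt
  have h3 := (hasDerivAt_const t (∫ s in (0:ℝ)..c, g s)).sub h2
  rw [h1]
  exact h3.congr_deriv (by ring)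

lemma primitive_contDiff {g : ℝ → ℝ} (hg : Continuous g) (c : ℝ) :
    ContDiff ℝ 1 (fun u => ∫ s in u..c, g s) := by
  rw [contDiff_one_iff_deriv]
  refine ⟨fun t => (primitive_hasDerivAt hg c t).differentiableAt, ?_⟩
  have : deriv (fun u => ∫ s in u..c, g s) = fun t => -(g t) :=
    funext fun t => (primitive_hasDerivAt hg c t).deriv
  rw [this]
  exact hg.neg

lemma integral_exp_neg {b : ℝ} (hb : 0 < b) (t u : ℝ) :
    ∫ s in t..u, Real.exp (-(b * s)) = (Real.exp (-(b * t)) - Real.exp (-(b * u))) / b := by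
  have hder : ∀ s ∈ Set.uIcc t u,
      HasDerivAt (fun r => -Real.exp (-(b * r)) / b) (Real.exp (-(b * s))) s := by
    intro s _
    have h1 : HasDerivAt (fun r : ℝ => -(b * r)) (-b) s := by
      exact (((hasDerivAt_id s).const_mul b).neg).congr_deriv (by ring)
    have h2 := h1.exp
    have h3 := (h2.neg).div_const b
    exact h3.congr_deriv (by rw [mul_neg, neg_neg, mul_div_assoc, div_self hb.ne', mul_one])
  rw [integral_eq_sub_of_hasDerivAt hder
    ((Real.continuous_exp.comp ((continuous_const.mul continuous_id).neg)).intervalIntegrable t u)]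
  field_simp
  ring

lemma lop_est {t : ℝ} (ht : t ∈ Set.Icc (0:ℝ) M.T) {x : Fin m → ℤ} (hx : x ∈ M.States)
    (h1 h2 : ℝ → (Fin m → ℤ) → ℝ)
    (hi1 : IntervalIntegrable (Gfun M pol h1 x) volume t M.T)
    (hi2 : IntervalIntegrable (Gfun M pol h2 x) volume t M.T)
    {d : ℝ} (hd : 0 ≤ d)
    (hb : ∀ s ∈ Set.Icc t M.T, ∀ y ∈ M.States, |h1 s y - h2 s y| ≤ d) :
    |M.Lop pol h1 t x - M.Lop pol h2 t x| ≤ 2 * M.lam / (2 * M.lam + 1) * d := by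
  have hβ : 0 < 2 * M.lam + 1 := by nlinarith [M.lam_pos]
  have htT : t ≤ M.T := ht.2
  have hsub : M.Lop pol h1 t x - M.Lop pol h2 t x
      = Real.exp ((2 * M.lam + 1) * t)
        * ∫ s in t..M.T, (Gfun M pol h1 x s - Gfun M pol h2 x s) := by
    rw [lop_eq, lop_eq, ← mul_sub, ← intervalIntegral.integral_sub hi1 hi2]
  rw [hsub, abs_mul, abs_of_nonneg (Real.exp_pos _).le]
  have hcont : Continuous fun s : ℝ =>
      Real.exp (-((2 * M.lam + 1) * s)) * (2 * M.lam * d) :=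
    (Real.continuous_exp.comp ((continuous_const.mul continuous_id).neg)).mul continuous_const
  have key : |∫ s in t..M.T, (Gfun M pol h1 x s - Gfun M pol h2 x s)|
      ≤ |∫ s in t..M.T, Real.exp (-((2 * M.lam + 1) * s)) * (2 * M.lam * d)| := by
    have hae : ∀ᵐ s ∂(volume.restrict (Set.uIoc t M.T)),
        ‖Gfun M pol h1 x s - Gfun M pol h2 x s‖
          ≤ Real.exp (-((2 * M.lam + 1) * s)) * (2 * M.lam * d) := by
      refine (ae_restrict_iff' measurableSet_uIoc).mpr (ae_of_all _ fun s hs => ?_)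
      rw [Set.uIoc_of_le htT] at hs
      have hmem : s ∈ Set.Icc t M.T := Set.Ioc_subset_Icc_self hs
      rw [Real.norm_eq_abs]
      have h3 := inner_bound M pol s hx (fun s y => h1 s y - h2 s y) hd
        (fun y hy => hb s hmem y hy)
      calc |Gfun M pol h1 x s - Gfun M pol h2 x s|
          = |∑ S ∈ M.feas x,
              (∑ y ∈ M.States,
                Real.exp (-((2 * M.lam + 1) * s)) * (h1 s y - h2 s y) * M.q s x S y)
                * pol.π s x S| := by
            rw [Gfun_sub M pol h1 h2 x s, add_sub_cancel_left]
        _ ≤ _ := h3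
    have := intervalIntegral.norm_integral_le_abs_of_norm_le hae (hcont.intervalIntegrable _ _)
    simpa [Real.norm_eq_abs] using this
  have hval : ∫ s in t..M.T, Real.exp (-((2 * M.lam + 1) * s)) * (2 * M.lam * d)
      = ((Real.exp (-((2 * M.lam + 1) * t)) - Real.exp (-((2 * M.lam + 1) * M.T)))
          / (2 * M.lam + 1)) * (2 * M.lam * d) := by
    rw [intervalIntegral.integral_mul_const, integral_exp_neg hβ]
  have hmono : Real.exp (-((2 * M.lam + 1) * M.T)) ≤ Real.exp (-((2 * M.lam + 1) * t)) :=
    Real.exp_le_exp.mpr (by nlinarith)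
  have hnn : 0 ≤ ((Real.exp (-((2 * M.lam + 1) * t)) - Real.exp (-((2 * M.lam + 1) * M.T)))
      / (2 * M.lam + 1)) * (2 * M.lam * d) := by
    refine mul_nonneg (div_nonneg (by linarith) hβ.le)
      (mul_nonneg (by nlinarith [M.lam_pos]) hd)
  calc Real.exp ((2 * M.lam + 1) * t)
        * |∫ s in t..M.T, (Gfun M pol h1 x s - Gfun M pol h2 x s)|
      ≤ Real.exp ((2 * M.lam + 1) * t)
        * |∫ s in t..M.T, Real.exp (-((2 * M.lam + 1) * s)) * (2 * M.lam * d)| :=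
        mul_le_mul_of_nonneg_left key (Real.exp_nonneg _)
    _ = Real.exp ((2 * M.lam + 1) * t)
        * ((Real.exp (-((2 * M.lam + 1) * t)) - Real.exp (-((2 * M.lam + 1) * M.T)))
            / (2 * M.lam + 1) * (2 * M.lam * d)) := by rw [hval, abs_of_nonneg hnn]
    _ ≤ Real.exp ((2 * M.lam + 1) * t)
        * (Real.exp (-((2 * M.lam + 1) * t)) / (2 * M.lam + 1) * (2 * M.lam * d)) := by
        have hle : Real.exp (-((2 * M.lam + 1) * t)) - Real.exp (-((2 * M.lam + 1) * M.T))
            ≤ Real.exp (-((2 * M.lam + 1) * t)) := by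
          linarith [Real.exp_pos (-((2 * M.lam + 1) * M.T))]
        refine mul_le_mul_of_nonneg_left ?_ (Real.exp_nonneg _)
        refine mul_le_mul_of_nonneg_right ?_ (mul_nonneg (by nlinarith [M.lam_pos]) hd)
        exact (div_le_div_iff_of_pos_right hβ).mpr hle
    _ = 2 * M.lam / (2 * M.lam + 1) * d
        * (Real.exp ((2 * M.lam + 1) * t) * Real.exp (-((2 * M.lam + 1) * t))) := by ring
    _ = 2 * M.lam / (2 * M.lam + 1) * d := by
        rw [← Real.exp_add]
        simp


/-- Extension of a continuous function on `[0,T] × 𝒳` to all of `ℝ × ℤ^m`. -/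
noncomputable def extFun (f : C(Set.Icc (0:ℝ) M.T, {y : Fin m → ℤ // y ∈ M.States} → ℝ)) :
    ℝ → (Fin m → ℤ) → ℝ := fun t x =>
  if hx : x ∈ M.States then f (Set.projIcc 0 M.T M.T_pos.le t) ⟨x, hx⟩ else 0

lemma extFun_cont (f : C(Set.Icc (0:ℝ) M.T, {y : Fin m → ℤ // y ∈ M.States} → ℝ))
    (x : Fin m → ℤ) : Continuous fun t => extFun M f t x := by
  by_cases hx : x ∈ M.States
  · simp only [extFun, dif_pos hx]
    exact (continuous_pi_iff.mp (map_continuous f) ⟨x, hx⟩).comp continuous_projIcc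
  · simp only [extFun, dif_neg hx]
    exact continuous_const

lemma extFun_eq (f : C(Set.Icc (0:ℝ) M.T, {y : Fin m → ℤ // y ∈ M.States} → ℝ))
    {t : ℝ} (ht : t ∈ Set.Icc (0:ℝ) M.T) {x : Fin m → ℤ} (hx : x ∈ M.States) :
    extFun M f t x = f ⟨t, ht⟩ ⟨x, hx⟩ := by
  simp only [extFun, dif_pos hx]
  rw [Set.projIcc_of_mem M.T_pos.le ht]

lemma lop_cont (h : ℝ → (Fin m → ℤ) → ℝ) (hc : ∀ y, Continuous fun s => h s y)
    (x : Fin m → ℤ) : Continuous fun t => M.Lop pol h t x := by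
  have hg := G_cont M pol h hc x
  have heq : (fun t => M.Lop pol h t x)
      = fun t => Real.exp ((2 * M.lam + 1) * t)
          * ((∫ s in (0:ℝ)..M.T, Gfun M pol h x s) - ∫ s in (0:ℝ)..t, Gfun M pol h x s) := by
    funext t
    rw [lop_eq, integral_interval_sub_left (hg.intervalIntegrable _ _)
      (hg.intervalIntegrable _ _)]
  rw [heq]
  have hprim : Continuous fun t : ℝ => ∫ s in (0:ℝ)..t, Gfun M pol h x s := by
    have : (fun t : ℝ => ∫ s in (0:ℝ)..t, Gfun M pol h x s)
        = fun t : ℝ => -∫ s in t..(0:ℝ), Gfun M pol h x s := by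
      funext t
      rw [intervalIntegral.integral_symm]
    rw [this]
    exact ((primitive_contDiff hg 0).continuous).neg
  exact (Real.continuous_exp.comp (continuous_const.mul continuous_id)).mul
    (continuous_const.sub hprim)

/-- The operator `ℒ` as a self-map of `C([0,T] × 𝒳)`. -/
noncomputable def TopMap :
    C(Set.Icc (0:ℝ) M.T, {y : Fin m → ℤ // y ∈ M.States} → ℝ) →
      C(Set.Icc (0:ℝ) M.T, {y : Fin m → ℤ // y ∈ M.States} → ℝ) := fun f =>
  ⟨fun t y => M.Lop pol (extFun M f) t.1 y.1, by
    refine continuous_pi fun y => ?_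
    exact (lop_cont M pol (extFun M f) (extFun_cont M f) y.1).comp continuous_subtype_val⟩

lemma K_lt_one : 2 * M.lam / (2 * M.lam + 1) < 1 := by
  rw [div_lt_one (by nlinarith [M.lam_pos])]
  linarith

lemma contractingTop :
    ContractingWith ⟨2 * M.lam / (2 * M.lam + 1),
        div_nonneg (by nlinarith [M.lam_pos]) (by nlinarith [M.lam_pos])⟩ (TopMap M pol) := by
  constructor
  · exact_mod_cast K_lt_one M
  · refine LipschitzWith.of_dist_le_mul fun f g => ?_
    have hd0 : (0:ℝ) ≤ dist f g := dist_nonneg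
    have hK0 : (0:ℝ) ≤ 2 * M.lam / (2 * M.lam + 1) :=
      div_nonneg (by nlinarith [M.lam_pos]) (by nlinarith [M.lam_pos])
    show dist (TopMap M pol f) (TopMap M pol g) ≤ 2 * M.lam / (2 * M.lam + 1) * dist f g
    rw [ContinuousMap.dist_le (mul_nonneg hK0 hd0)]
    intro t
    rw [dist_pi_le_iff (mul_nonneg hK0 hd0)]
    intro y
    rw [Real.dist_eq]
    show |M.Lop pol (extFun M f) t.1 y.1 - M.Lop pol (extFun M g) t.1 y.1| ≤ _
    refine lop_est M pol t.2 y.2 _ _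
      ((G_cont M pol _ (extFun_cont M f) y.1).intervalIntegrable _ _)
      ((G_cont M pol _ (extFun_cont M g) y.1).intervalIntegrable _ _)
      hd0 fun s hs z hz => ?_
    have hs' : s ∈ Set.Icc (0:ℝ) M.T := ⟨le_trans t.2.1 hs.1, hs.2⟩
    rw [extFun_eq M f hs' hz, extFun_eq M g hs' hz]
    calc |f ⟨s, hs'⟩ ⟨z, hz⟩ - g ⟨s, hs'⟩ ⟨z, hz⟩|
        = dist (f ⟨s, hs'⟩ ⟨z, hz⟩) (g ⟨s, hs'⟩ ⟨z, hz⟩) := (Real.dist_eq _ _).symm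
      _ ≤ dist (f ⟨s, hs'⟩) (g ⟨s, hs'⟩) := dist_le_pi_dist _ _ _
      _ ≤ dist f g := ContinuousMap.dist_apply_le_dist _

lemma Gfun_integrable_of_meas (h : ℝ → (Fin m → ℤ) → ℝ)
    (hm : ∀ y, Measurable fun s => h s y) {x : Fin m → ℤ} (hx : x ∈ M.States)
    {C : ℝ} (hC0 : 0 ≤ C) (hC : ∀ s ∈ Set.Icc (0:ℝ) M.T, ∀ y ∈ M.States, |h s y| ≤ C)
    {t : ℝ} (ht : t ∈ Set.Icc (0:ℝ) M.T) :
    IntervalIntegrable (Gfun M pol h x) volume t M.T := by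
  have heq : Gfun M pol h x = fun s =>
      Gfun M pol (fun _ _ => (0:ℝ)) x s
        + ∑ S ∈ M.feas x,
            (∑ y ∈ M.States,
              Real.exp (-((2 * M.lam + 1) * s)) * (h s y - 0) * M.q s x S y)
              * pol.π s x S :=
    funext fun s => Gfun_sub M pol h (fun _ _ => 0) x s
  rw [heq]
  refine IntervalIntegrable.add
    ((G_cont M pol _ (fun y => continuous_const) x).intervalIntegrable _ _) ?_
  refine intervalIntegrable_of_bdd ?_ (C := 2 * M.lam * C) ?_
  · refine Finset.measurable_sum _ fun S _ => Measurable.mul ?_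
      (pol.continuous_t x S).measurable
    refine Finset.measurable_sum _ fun y _ => ?_
    exact ((Real.measurable_exp.comp (measurable_const.mul measurable_id).neg).mul
      ((hm y).sub measurable_const)).mul
        (measurable_const : Measurable fun _ : ℝ => M.q 0 x S y)
  · intro s hs
    rw [Set.uIoc_of_le ht.2] at hs
    have hmem : s ∈ Set.Icc (0:ℝ) M.T := ⟨le_trans ht.1 hs.1.le, hs.2⟩
    have h3 := inner_bound M pol s hx (fun s y => h s y - 0) hC0
      (fun y hy => by simpa using hC s hmem y hy)
    refine h3.trans ?_
    have hexp1 : Real.exp (-((2 * M.lam + 1) * s)) ≤ 1 := by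
      rw [Real.exp_le_one_iff]
      nlinarith [M.lam_pos, hmem.1]
    nlinarith [Real.exp_pos (-((2 * M.lam + 1) * s)), M.lam_pos, hC0,
      mul_nonneg (mul_nonneg (by nlinarith [M.lam_pos] : (0:ℝ) ≤ 2 * M.lam) hC0)
        (sub_nonneg.mpr hexp1)]


noncomputable def fixC : C(Set.Icc (0:ℝ) M.T, {y : Fin m → ℤ // y ∈ M.States} → ℝ) :=
  haveI : Nonempty C(Set.Icc (0:ℝ) M.T, {y : Fin m → ℤ // y ∈ M.States} → ℝ) :=
    ⟨ContinuousMap.const _ 0⟩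
  ContractingWith.fixedPoint (TopMap M pol) (contractingTop M pol)

lemma fixC_fix : TopMap M pol (fixC M pol) = fixC M pol :=
  haveI : Nonempty C(Set.Icc (0:ℝ) M.T, {y : Fin m → ℤ // y ∈ M.States} → ℝ) :=
    ⟨ContinuousMap.const _ 0⟩
  (contractingTop M pol).fixedPoint_isFixedPt

/-- The fixed point `ψ*` of `ℒ`, as a function on `ℝ × ℤ^m`. -/
noncomputable def psiStar : ℝ → (Fin m → ℤ) → ℝ := extFun M (fixC M pol)

lemma psiStar_cont (y : Fin m → ℤ) : Continuous fun s => psiStar M pol s y :=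
  extFun_cont M _ y

lemma psiStar_bd {t : ℝ} (ht : t ∈ Set.Icc (0:ℝ) M.T) {x : Fin m → ℤ}
    (hx : x ∈ M.States) : |psiStar M pol t x| ≤ ‖fixC M pol‖ := by
  rw [psiStar, extFun_eq M _ ht hx, ← Real.norm_eq_abs]
  exact le_trans (norm_le_pi_norm _ _) (ContinuousMap.norm_coe_le_norm _ _)

lemma psiStar_fp {t : ℝ} (ht : t ∈ Set.Icc (0:ℝ) M.T) {x : Fin m → ℤ}
    (hx : x ∈ M.States) : M.Lop pol (psiStar M pol) t x = psiStar M pol t x := by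
  have h1 : M.Lop pol (psiStar M pol) t x
      = (TopMap M pol (fixC M pol)) ⟨t, ht⟩ ⟨x, hx⟩ := rfl
  rw [h1, fixC_fix]
  exact (extFun_eq M _ ht hx).symm

lemma vrep {t : ℝ} (ht : t ∈ Set.Icc (0:ℝ) M.T) {x : Fin m → ℤ}
    (hx : x ∈ M.States) :
    Real.exp (-((2 * M.lam + 1) * t)) * psiStar M pol t x
      = ∫ s in t..M.T, Gfun M pol (psiStar M pol) x s := by
  rw [← psiStar_fp M pol ht hx, lop_eq, ← mul_assoc, ← Real.exp_add]
  simp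

lemma zero_mem_States : (0 : Fin m → ℤ) ∈ M.States := by
  rw [NRM.States, Fintype.mem_piFinset]
  intro i
  simp [Finset.mem_Icc, Int.natCast_nonneg]

end Aux
/-- For every admissible policy `π`, the system of differential equations
`∂v/∂t (t,x) + ∑_{S ∈ 𝒜(x)} H(t,x,S,v) π(S|t,x) + γ ℋ(π(·|t,x)) = 0` on
`[0,T) × 𝒳` with terminal condition `v(T,x) = 0` admits a solution
`v ∈ C^{1,0}([0,T] × 𝒳)`, namely `v(t,x) = e^{-βt} ψ*(t,x)` where `β = 2λ+1` and
`ψ*` is the (unique, among bounded measurable functions) fixed point of the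
contraction `ℒ` on `B([0,T] × 𝒳)`. -/
theorem exists_solution_ode {m n : ℕ} (M : NRM m n) (pol : Policy M) :
    ∃ ψstar : ℝ → (Fin m → ℤ) → ℝ,
      -- ψ* belongs to B([0,T] × 𝒳)
      (∀ x, Measurable fun t => ψstar t x) ∧
      (∃ C, ∀ t ∈ Set.Icc (0:ℝ) M.T, ∀ x ∈ M.States, |ψstar t x| ≤ C) ∧
      -- ψ* is a fixed point of ℒ
      (∀ t ∈ Set.Icc (0:ℝ) M.T, ∀ x ∈ M.States, M.Lop pol ψstar t x = ψstar t x) ∧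
      -- the fixed point of ℒ in B([0,T] × 𝒳) is unique
      (∀ ψ' : ℝ → (Fin m → ℤ) → ℝ,
        (∀ x, Measurable fun t => ψ' t x) →
        (∃ C, ∀ t ∈ Set.Icc (0:ℝ) M.T, ∀ x ∈ M.States, |ψ' t x| ≤ C) →
        (∀ t ∈ Set.Icc (0:ℝ) M.T, ∀ x ∈ M.States, M.Lop pol ψ' t x = ψ' t x) →
        ∀ t ∈ Set.Icc (0:ℝ) M.T, ∀ x ∈ M.States, ψ' t x = ψstar t x) ∧
      -- v(t,x) = e^{-βt} ψ*(t,x) is a C^{1,0} solution of the ODE system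
      (M.C10 (fun t x => Real.exp (-((2 * M.lam + 1) * t)) * ψstar t x) ∧
        (∀ t ∈ Set.Ico (0:ℝ) M.T, ∀ x ∈ M.States,
          M.dvt (fun s y => Real.exp (-((2 * M.lam + 1) * s)) * ψstar s y) t x
            + (∑ S ∈ M.feas x,
                M.H t x S (fun s y => Real.exp (-((2 * M.lam + 1) * s)) * ψstar s y)
                  * pol.π t x S)
            + M.gamma * M.ent pol t x = 0) ∧
        (∀ x ∈ M.States,
          Real.exp (-((2 * M.lam + 1) * M.T)) * ψstar M.T x = 0)) := by
  have hT : (0:ℝ) ≤ M.T := M.T_pos.le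
  refine ⟨psiStar M pol, fun x => (extFun_cont M _ x).measurable,
    ⟨‖fixC M pol‖, fun t ht x hx => psiStar_bd M pol ht hx⟩,
    fun t ht x hx => psiStar_fp M pol ht hx, ?_, ?_, ?_, ?_⟩
  · -- uniqueness
    intro ψ' hmeas' hbd' hfp' t ht x hx
    obtain ⟨C', hC'⟩ := hbd'
    have hC'0 : 0 ≤ C' := le_trans (abs_nonneg _) (hC' t ht x hx)
    have hCs : ∀ u ∈ Set.Icc (0:ℝ) M.T, ∀ y ∈ M.States,
        |psiStar M pol u y| ≤ ‖fixC M pol‖ := fun u hu y hy => psiStar_bd M pol hu hy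
    set Dset : Set ℝ :=
      {d | ∃ u ∈ Set.Icc (0:ℝ) M.T, ∃ y ∈ M.States, d = |ψ' u y - psiStar M pol u y|}
      with hDset
    have hne : Dset.Nonempty := ⟨_, t, ht, x, hx, rfl⟩
    have hbdd : BddAbove Dset := by
      refine ⟨C' + ‖fixC M pol‖, ?_⟩
      rintro d ⟨u, hu, y, hy, rfl⟩
      have h1 : |ψ' u y - psiStar M pol u y| ≤ |ψ' u y| + |psiStar M pol u y| := by
        simpa [sub_eq_add_neg] using abs_add_le (ψ' u y) (-(psiStar M pol u y))
      exact le_trans h1 (add_le_add (hC' u hu y hy) (hCs u hu y hy))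
    set D := sSup Dset with hD
    have hDle : ∀ u ∈ Set.Icc (0:ℝ) M.T, ∀ y ∈ M.States,
        |ψ' u y - psiStar M pol u y| ≤ D :=
      fun u hu y hy => le_csSup hbdd ⟨u, hu, y, hy, rfl⟩
    have hD0 : 0 ≤ D := le_trans (abs_nonneg _) (hDle t ht x hx)
    have key : ∀ u ∈ Set.Icc (0:ℝ) M.T, ∀ y ∈ M.States,
        |ψ' u y - psiStar M pol u y| ≤ 2 * M.lam / (2 * M.lam + 1) * D := by
      intro u hu y hy
      rw [← hfp' u hu y hy, ← psiStar_fp M pol hu hy]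
      exact lop_est M pol hu hy ψ' (psiStar M pol)
        (Gfun_integrable_of_meas M pol ψ' hmeas' hy hC'0 hC' hu)
        ((G_cont M pol _ (psiStar_cont M pol) y).intervalIntegrable _ _)
        hD0 (fun s hs z hz => hDle s ⟨le_trans hu.1 hs.1, hs.2⟩ z hz)
    have hsup : D ≤ 2 * M.lam / (2 * M.lam + 1) * D := by
      refine csSup_le hne ?_
      rintro d ⟨u, hu, y, hy, rfl⟩
      exact key u hu y hy
    have hK1 := K_lt_one M
    have hDz : D ≤ 0 := by nlinarith
    have habs : |ψ' t x - psiStar M pol t x| ≤ 0 := le_trans (hDle t ht x hx) hDz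
    exact sub_eq_zero.mp (abs_nonpos_iff.mp habs)
  · -- C^{1,0}
    intro x hx
    have hg := G_cont M pol (psiStar M pol) (psiStar_cont M pol) x
    exact (primitive_contDiff hg M.T).contDiffOn.congr
      fun t ht => vrep M pol ht hx
  · -- the ODE
    intro t ht x hx
    have htI : t ∈ Set.Icc (0:ℝ) M.T := ⟨ht.1, ht.2.le⟩
    have hg := G_cont M pol (psiStar M pol) (psiStar_cont M pol) x
    have hEq : Set.EqOn (fun s => Real.exp (-((2 * M.lam + 1) * s)) * psiStar M pol s x)
        (fun u => ∫ s in u..M.T, Gfun M pol (psiStar M pol) x s) (Set.Icc (0:ℝ) M.T) :=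
      fun u hu => vrep M pol hu hx
    have huniq : UniqueDiffWithinAt ℝ (Set.Icc (0:ℝ) M.T) t :=
      (uniqueDiffOn_Icc M.T_pos) t htI
    simp only [NRM.dvt]
    rw [derivWithin_congr hEq (hEq htI),
      (primitive_hasDerivAt hg M.T t).hasDerivWithinAt.derivWithin huniq]
    have hsplit : ∑ S ∈ M.feas x,
        M.H t x S (fun s y => Real.exp (-((2 * M.lam + 1) * s)) * psiStar M pol s y)
          * pol.π t x S
        = (∑ S ∈ M.feas x, M.r S * pol.π t x S)
          + ∑ S ∈ M.feas x,
              (∑ y ∈ M.States,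
                Real.exp (-((2 * M.lam + 1) * t)) * psiStar M pol t y * M.q t x S y)
                * pol.π t x S := by
      rw [← Finset.sum_add_distrib]
      exact Finset.sum_congr rfl fun S _ => by rw [NRM.H, add_mul]
    rw [hsplit]
    simp only [Gfun]
    ring
  · -- terminal condition
    intro x hx
    rw [← psiStar_fp M pol ⟨hT, le_rfl⟩ hx, lop_eq, intervalIntegral.integral_same,
      mul_zero, mul_zero]

end RLNRM
end
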